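/- arXiv:1011.2590 — 5 statements merged into one kernel-verified Lean document; each statement's English description precedes it below -/
import Mathlib

section
/- For every sequence S ∈ A, E[R_S] = WEIGHT(G(S)). -/
open Finset MeasureTheory ProbabilityTheory

noncomputable section

/-- The set of sequences `S = (S_1, …, S_{2m})` of pairs `S_j = (S_{j,1}, S_{j,2})` of
integers with `1 ≤ S_{j,1} < S_{j,2} ≤ d` (realized as elements of `Fin d`). -/
def Seqs (d m : ℕ) : Set (Fin (2*m) → Fin d × Fin d) :=
  {S | ∀ j, (S j).1 < (S j).2}

/-- The simple graph underlying the multigraph `G(S)`: `a ≠ b` are adjacent iff some pair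
of the sequence `S` equals `(a,b)` or `(b,a)`. -/
def graphOf {d m : ℕ} (S : Fin (2*m) → Fin d × Fin d) : SimpleGraph (Fin d) where
  Adj a b := a ≠ b ∧ ∃ j, S j = (a, b) ∨ S j = (b, a)
  symm := ⟨fun _ _ ⟨hab, j, h⟩ => ⟨hab.symm, j, h.symm⟩⟩
  loopless := ⟨fun _ ⟨h, _⟩ => h rfl⟩

/-- `Ver(G(S))`: the set of integers occurring in the sequence `S`, i.e. the vertices of
`G(S)` (all of which have positive degree). -/
def Ver {d m : ℕ} (S : Fin (2*m) → Fin d × Fin d) : Finset (Fin d) :=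
  univ.filter (fun v => ∃ j, (S j).1 = v ∨ (S j).2 = v)

/-- The degree of `v` in the multigraph `G(S)`: the number of pairs `(j,a)` with
`S_{j,a} = v`. -/
def deg {d m : ℕ} (S : Fin (2*m) → Fin d × Fin d) (v : Fin d) : ℕ :=
  (univ.filter (fun j => (S j).1 = v)).card + (univ.filter (fun j => (S j).2 = v)).card

open scoped Classical in
/-- The number of connected components of the multigraph `G(S)`, i.e. the number of
connected components of the underlying simple graph that meet `Ver(G(S))`. -/
def numComp {d m : ℕ} (S : Fin (2*m) → Fin d × Fin d) : ℕ :=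
  ((Ver S).image (fun v => (graphOf S).connectedComponentMk v)).card

/-- `[i] = {1, …, i}`, realized as the first `i` elements of `Fin d`. -/
def seg (d i : ℕ) : Finset (Fin d) := univ.filter (fun v => (v : ℕ) < i)

/-- `W_{Q,t}`: the set of sequences `S` with `Ver(G(S)) = Q`, all degrees of `G(S)`
positive and even, and `G(S)` having exactly `t` connected components. -/
def W (d m : ℕ) (Q : Finset (Fin d)) (t : ℕ) : Set (Fin (2*m) → Fin d × Fin d) :=
  {S | S ∈ Seqs d m ∧ Ver S = Q ∧ (∀ v ∈ Ver S, 0 < deg S v ∧ Even (deg S v)) ∧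
    numComp S = t}

open scoped Classical in
/-- The vertex set of the connected component `c` of the multigraph `G(S)`. -/
def compVer {d m : ℕ} (S : Fin (2*m) → Fin d × Fin d)
    (c : (graphOf S).ConnectedComponent) : Finset (Fin d) :=
  (Ver S).filter (fun v => (graphOf S).connectedComponentMk v = c)

open scoped Classical in
/-- `WEIGHT(G(S))`: the product over the connected components `G_c` of `G(S)` of
`WEIGHT(G_c)`, where `WEIGHT(G_c) = 0` if `G_c` has a vertex of odd degree, and
`WEIGHT(G_c) = k^{-(|V_c|-1)} · Π_{v ∈ V_c} x_v^{deg(v)}` otherwise. -/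
def WEIGHT {d m : ℕ} (k : ℕ) (x : Fin d → ℝ) (S : Fin (2*m) → Fin d × Fin d) : ℝ :=
  ∏ c ∈ (Ver S).image (fun v => (graphOf S).connectedComponentMk v),
    if ∀ v ∈ compVer S c, Even (deg S v) then
      ((k : ℝ) ^ ((compVer S c).card - 1))⁻¹ * ∏ v ∈ compVer S c, x v ^ deg S v
    else 0

/-- `SQUARES(V) = Π_{v ∈ V} x_v²`. -/
def SQUARES {d : ℕ} (x : Fin d → ℝ) (V : Finset (Fin d)) : ℝ := ∏ v ∈ V, x v ^ 2

/-- `Z = Σ_{t=1}^k Σ_{i≠j∈[d]} x_i x_j ζ_i ζ_j 1{H(i)=H(j)=t}`. -/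
def Z {d k : ℕ} {Ω : Type} (x : Fin d → ℝ) (ζ : Ω → Fin d → ℝ)
    (H : Ω → Fin d → Fin k) (ω : Ω) : ℝ :=
  ∑ t : Fin k, ∑ i : Fin d, ∑ j : Fin d,
    if i ≠ j ∧ H ω i = t ∧ H ω j = t then x i * x j * ζ ω i * ζ ω j else 0

/-- The random variable
`R_S = Π_{j=1}^{2m} (x_{S_{j,1}} x_{S_{j,2}} ζ_{S_{j,1}} ζ_{S_{j,2}} Σ_{t=1}^k 1{H(S_{j,1}) = H(S_{j,2}) = t})`. -/
def R {d k m : ℕ} {Ω : Type} (x : Fin d → ℝ) (ζ : Ω → Fin d → ℝ)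
    (H : Ω → Fin d → Fin k) (S : Fin (2*m) → Fin d × Fin d) (ω : Ω) : ℝ :=
  ∏ j : Fin (2*m),
    (x (S j).1 * x (S j).2 * ζ ω (S j).1 * ζ ω (S j).2 *
      ∑ t : Fin k, if H ω (S j).1 = t ∧ H ω (S j).2 = t then (1:ℝ) else 0)

/-- The family of random variables `f 1, …, f d` is `n`-wise independent: every subfamily
consisting of at most `n` of them is (jointly) independent. -/
def KWiseIndep {d : ℕ} {Ω β : Type} [MeasurableSpace Ω] [mβ : MeasurableSpace β]
    (n : ℕ) (f : Fin d → Ω → β) (μ : Measure Ω) : Prop :=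
  ∀ s : Finset (Fin d), s.card ≤ n →
    iIndepFun (m := fun _ : s => mβ) (fun i : s => f i) μ


private lemma aux_prod_fiber {d n : ℕ} (V : Finset (Fin d)) (g : Fin n → Fin d) (x : Fin d → ℝ)
    (h : ∀ j, g j ∈ V) :
    ∏ j : Fin n, x (g j) = ∏ v ∈ V, x v ^ (univ.filter (fun j => g j = v)).card := by
  classical
  rw [← Finset.prod_fiberwise_of_maps_to (fun j _ => h j) (fun j => x (g j))]
  refine Finset.prod_congr rfl fun v _ => ?_
  rw [Finset.prod_congr rfl (fun j hj => by rw [(Finset.mem_filter.1 hj).2]),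
    Finset.prod_const]

private lemma aux_sum_ind (k : ℕ) (a b : Fin k) :
    (∑ t : Fin k, if a = t ∧ b = t then (1:ℝ) else 0) = if a = b then 1 else 0 := by
  by_cases h : a = b
  · subst h; simp
  · simp only [h, if_false]
    exact Finset.sum_eq_zero fun t _ => by
      rw [if_neg]; rintro ⟨rfl, rfl⟩; exact h rfl

private lemma aux_const {d m : ℕ} (S : Fin (2*m) → Fin d × Fin d) {α : Type*} (F : Fin d → α)
    (h : ∀ j, F (S j).1 = F (S j).2) {u v : Fin d}
    (hr : (graphOf S).Reachable u v) : F u = F v := by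
  obtain ⟨w⟩ := hr
  induction w with
  | nil => rfl
  | cons ha p ih =>
    refine Eq.trans ?_ ih
    obtain ⟨-, j, hj | hj⟩ := ha
    · have := h j; rw [hj] at this; exact this
    · have := h j; rw [hj] at this; exact this.symm

private lemma aux_int_pm {Ω : Type} [MeasurableSpace Ω] (μ : Measure Ω) [IsProbabilityMeasure μ]
    (g : Ω → ℝ) (hg : Measurable g) (hv : ∀ ω, g ω = 1 ∨ g ω = -1)
    (h1 : μ {ω | g ω = 1} = 1/2) (h2 : μ {ω | g ω = -1} = 1/2) :
    ∫ ω, g ω ∂μ = 0 := by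
  have hA : MeasurableSet {ω | g ω = 1} := hg (measurableSet_singleton 1)
  have hB : MeasurableSet {ω | g ω = -1} := hg (measurableSet_singleton (-1))
  have hfun : g = fun ω => ({ω | g ω = 1}.indicator (fun _ => (1:ℝ)) ω
      + {ω | g ω = -1}.indicator (fun _ => (-1:ℝ)) ω) := by
    funext ω
    rcases hv ω with h | h <;>
      simp [Set.indicator_apply, h, show (1:ℝ) ≠ -1 by norm_num,
        show ¬(-1:ℝ) = 1 by norm_num]
  rw [hfun, integral_add ((integrable_const (1:ℝ)).indicator hA)
    ((integrable_const (-1:ℝ)).indicator hB),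
    integral_indicator_const _ hA, integral_indicator_const _ hB, measureReal_def, measureReal_def, h1, h2]
  simp [ENNReal.toReal_div]

/-- Under the distributional assumptions of the construction (`ζ` uniform
on `{-1,1}^d` with `4m`-wise independent coordinates, `H` uniform on `[k]^d` with
`4m`-wise independent values, `ζ` independent of `H`), for every sequence `S ∈ A`,
`E[R_S] = WEIGHT(G(S))`. -/
theorem statement4 (d k m : ℕ) (hd : 0 < d) (hk : 0 < k) (hm : 0 < m)
    (x : Fin d → ℝ)
    (Ω : Type) [MeasurableSpace Ω] (μ : Measure Ω) (hμ : IsProbabilityMeasure μ)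
    (ζ : Ω → Fin d → ℝ) (H : Ω → Fin d → Fin k)
    (hζm : Measurable ζ) (hHm : Measurable H)
    (hζv : ∀ ω i, ζ ω i = 1 ∨ ζ ω i = -1)
    (hζu : ∀ i, μ {ω | ζ ω i = 1} = 1/2 ∧ μ {ω | ζ ω i = -1} = 1/2)
    (hHu : ∀ i t, μ {ω | H ω i = t} = ((k : ENNReal))⁻¹)
    (hζi : KWiseIndep (4*m) (fun i ω => ζ ω i) μ)
    (hHi : KWiseIndep (4*m) (fun i ω => H ω i) μ)
    (hζH : IndepFun ζ H μ)
    (S : Fin (2*m) → Fin d × Fin d) (hS : S ∈ Seqs d m) :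
    (∫ ω, R x ζ H S ω ∂μ) = WEIGHT k x S := by
  classical
  have hkR : (k:ℝ) ≠ 0 := Nat.cast_ne_zero.2 hk.ne'
  set G := graphOf S with hG
  set V : Finset (Fin d) := Ver S with hV
  set C : Finset G.ConnectedComponent :=
    V.image (fun v => G.connectedComponentMk v) with hC
  set O : Finset (Fin d) := V.filter (fun v => ¬ Even (deg S v)) with hO
  have hmem : ∀ j : Fin (2*m), (S j).1 ∈ V ∧ (S j).2 ∈ V := fun j =>
    ⟨Finset.mem_filter.2 ⟨Finset.mem_univ _, ⟨j, Or.inl rfl⟩⟩,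
     Finset.mem_filter.2 ⟨Finset.mem_univ _, ⟨j, Or.inr rfl⟩⟩⟩
  have hVcard : V.card ≤ 4 * m := by
    have hsub : V ⊆ univ.image (fun j : Fin (2*m) => (S j).1)
        ∪ univ.image (fun j : Fin (2*m) => (S j).2) := by
      intro v hv
      obtain ⟨-, j, hj | hj⟩ := Finset.mem_filter.1 hv
      · exact Finset.mem_union_left _ (Finset.mem_image.2 ⟨j, Finset.mem_univ _, hj⟩)
      · exact Finset.mem_union_right _ (Finset.mem_image.2 ⟨j, Finset.mem_univ _, hj⟩)
    calc V.card ≤ _ := Finset.card_le_card hsub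
      _ ≤ (univ.image (fun j : Fin (2*m) => (S j).1)).card
          + (univ.image (fun j : Fin (2*m) => (S j).2)).card := Finset.card_union_le _ _
      _ ≤ 2*m + 2*m := by
          refine add_le_add ?_ ?_ <;>
            simpa using Finset.card_image_le (s := (univ : Finset (Fin (2*m))))
      _ = 4*m := by ring
  -- adjacency of the two ends of each pair
  have hadj : ∀ j : Fin (2*m), G.Adj (S j).1 (S j).2 := fun j =>
    ⟨Fin.ne_of_lt (hS j), j, Or.inl rfl⟩
  -- the three factors
  set P1 : ℝ := ∏ v ∈ V, x v ^ deg S v with hP1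
  set X : Ω → ℝ := fun ω => ∏ v ∈ O, ζ ω v with hX
  set Y : Ω → ℝ := fun ω => if ∀ j : Fin (2*m), H ω (S j).1 = H ω (S j).2
    then (1:ℝ) else 0 with hY
  -- pointwise rewriting of R
  have hRrw : ∀ ω, R x ζ H S ω = P1 * (X ω * Y ω) := by
    intro ω
    have h1 : R x ζ H S ω = ∏ j : Fin (2*m),
        ((x (S j).1 * x (S j).2) * ((ζ ω (S j).1 * ζ ω (S j).2) *
          (if H ω (S j).1 = H ω (S j).2 then (1:ℝ) else 0))) := by
      refine Finset.prod_congr rfl fun j _ => ?_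
      rw [aux_sum_ind]; ring
    rw [h1, Finset.prod_mul_distrib, Finset.prod_mul_distrib, Finset.prod_mul_distrib,
      Finset.prod_mul_distrib]
    have hx1 := aux_prod_fiber V (fun j => (S j).1) x (fun j => (hmem j).1)
    have hx2 := aux_prod_fiber V (fun j => (S j).2) x (fun j => (hmem j).2)
    have hz1 := aux_prod_fiber V (fun j => (S j).1) (ζ ω) (fun j => (hmem j).1)
    have hz2 := aux_prod_fiber V (fun j => (S j).2) (ζ ω) (fun j => (hmem j).2)
    rw [hx1, hx2, hz1, hz2, ← Finset.prod_mul_distrib, ← Finset.prod_mul_distrib]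
    have hxP : (∏ v ∈ V, x v ^ (univ.filter (fun j => (S j).1 = v)).card *
        x v ^ (univ.filter (fun j => (S j).2 = v)).card) = P1 := by
      refine Finset.prod_congr rfl fun v _ => ?_
      rw [← pow_add]; rfl
    have hzX : (∏ v ∈ V, ζ ω v ^ (univ.filter (fun j => (S j).1 = v)).card *
        ζ ω v ^ (univ.filter (fun j => (S j).2 = v)).card) = X ω := by
      have : ∀ v ∈ V, ζ ω v ^ (univ.filter (fun j => (S j).1 = v)).card *
          ζ ω v ^ (univ.filter (fun j => (S j).2 = v)).card
          = if ¬ Even (deg S v) then ζ ω v else 1 := by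
        intro v _
        rw [← pow_add]
        show ζ ω v ^ deg S v = _
        rcases hζv ω v with h | h
        · by_cases he : Even (deg S v) <;> simp [h, he]
        · by_cases he : Even (deg S v)
          · simp [h, he, he.neg_one_pow]
          · simp [h, he, (Nat.not_even_iff_odd.mp he).neg_one_pow]
      rw [Finset.prod_congr rfl this]
      exact (Finset.prod_filter _ _).symm
    have hYb : (∏ j : Fin (2*m), if H ω (S j).1 = H ω (S j).2 then (1:ℝ) else 0) = Y ω := by
      rw [Finset.prod_boole, hY]
      simp
    rw [hxP, hzX, hYb]
  simp only [hRrw]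
  rw [integral_const_mul]
  -- independence of X and Y
  have hXm : Measurable X :=
    Finset.measurable_prod _ (fun v _ => (measurable_pi_apply v).comp hζm)
  have hYm : Measurable Y := by
    have : Y = (fun h : Fin d → Fin k =>
        if ∀ j : Fin (2*m), h (S j).1 = h (S j).2 then (1:ℝ) else 0) ∘ H := rfl
    rw [this]
    exact (measurable_of_countable _).comp hHm
  have hIndepXY : IndepFun X Y μ := by
    have hFx : Measurable (fun y : Fin d → ℝ => ∏ v ∈ O, y v) :=
      Finset.measurable_prod _ (fun v _ => measurable_pi_apply v)
    have hFy : Measurable (fun h : Fin d → Fin k =>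
        if ∀ j : Fin (2*m), h (S j).1 = h (S j).2 then (1:ℝ) else 0) :=
      measurable_of_countable _
    exact hζH.comp hFx hFy
  have hsplit : ∫ ω, X ω * Y ω ∂μ = (∫ ω, X ω ∂μ) * ∫ ω, Y ω ∂μ := by
    have := hIndepXY.integral_mul_eq_mul_integral hXm.aestronglyMeasurable hYm.aestronglyMeasurable
    simpa [Pi.mul_apply] using this
  rw [hsplit]
  -- computation of ∫ Y
  have hindH := hHi V hVcard
  have cmapmem : ∀ i : {x // x ∈ V}, G.connectedComponentMk (i : Fin d) ∈ C :=
    fun i => Finset.mem_image_of_mem _ i.2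
  set cmap : {v // v ∈ V} → {c // c ∈ C} := fun i => ⟨G.connectedComponentMk ↑i, cmapmem i⟩
    with hcmap
  set Ef : ({c // c ∈ C} → Fin k) → Set Ω := fun f =>
    ⋂ i ∈ (univ : Finset {v // v ∈ V}), (fun ω => H ω ↑i) ⁻¹' {f (cmap i)} with hEf
  have hEfmeas : ∀ f, MeasurableSet (Ef f) := by
    intro f
    refine Finset.measurableSet_biInter _ fun i _ => ?_
    exact ((measurable_pi_apply (↑i : Fin d)).comp hHm) (measurableSet_singleton _)
  have hEfmu : ∀ f, μ (Ef f) = ((k:ENNReal))⁻¹ ^ V.card := by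
    intro f
    have h := hindH.measure_inter_preimage_eq_mul (sets := fun i => {f (cmap i)})
      Finset.univ (fun i _ => measurableSet_singleton _)
    rw [hEf]
    rw [h]
    have : ∀ i : {v // v ∈ V},
        μ ((fun ω => H ω ↑i) ⁻¹' {f (cmap i)}) = ((k:ENNReal))⁻¹ := by
      intro i
      have : ((fun ω => H ω ↑i) ⁻¹' {f (cmap i)}) = {ω | H ω ↑i = f (cmap i)} := rfl
      rw [this, hHu]
    rw [Finset.prod_congr rfl (fun i _ => this i), Finset.prod_const, Finset.card_univ,
      Fintype.card_coe]
  -- Y as a sum of indicators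
  have hYsum : ∀ ω, Y ω = ∑ f : {c // c ∈ C} → Fin k,
      (Ef f).indicator (fun _ => (1:ℝ)) ω := by
    intro ω
    have hmemEf : ∀ f, ω ∈ Ef f ↔ ∀ i : {v // v ∈ V}, H ω ↑i = f (cmap i) := by
      intro f; simp [hEf]
    have hvrep : ∀ c : G.ConnectedComponent, G.connectedComponentMk (Quot.out c) = c :=
      fun c => Quot.out_eq c
    by_cases hω : ∀ j : Fin (2*m), H ω (S j).1 = H ω (S j).2
    · -- exactly one f matches
      set f0 : {c // c ∈ C} → Fin k := fun c => H ω (Quot.out c.1) with hf0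
      have hf0mem : ω ∈ Ef f0 := by
        rw [hmemEf]
        intro i
        refine aux_const S (H ω) hω ?_
        exact SimpleGraph.ConnectedComponent.exact (hvrep (G.connectedComponentMk ↑i)).symm
      have huniq : ∀ f, ω ∈ Ef f → f = f0 := by
        intro f hf
        funext c
        obtain ⟨v, hvV, hvc⟩ := Finset.mem_image.1 c.2
        have h1 : f (cmap ⟨v, hvV⟩) = H ω v := ((hmemEf f).1 hf ⟨v, hvV⟩).symm
        have h2 : cmap ⟨v, hvV⟩ = c := Subtype.ext hvc
        rw [h2] at h1
        rw [h1, hf0]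
        refine aux_const S (H ω) hω ?_
        exact SimpleGraph.ConnectedComponent.exact (hvc.trans (hvrep c.1).symm)
      rw [hY]
      simp only [hω, if_true]
      rw [Finset.sum_eq_single f0]
      · simp [Set.indicator_apply, hf0mem]
      · intro f _ hne
        simp only [Set.indicator_apply, ite_eq_right_iff]
        intro hf; exact absurd (huniq f hf) hne
      · intro h; exact absurd (Finset.mem_univ f0) h
    · -- no f matches
      have : ∀ f : {c // c ∈ C} → Fin k, ω ∉ Ef f := by
        intro f hf
        apply hω
        intro j
        have h1 := (hmemEf f).1 hf ⟨(S j).1, (hmem j).1⟩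
        have h2 := (hmemEf f).1 hf ⟨(S j).2, (hmem j).2⟩
        have hcc : cmap ⟨(S j).1, (hmem j).1⟩ = cmap ⟨(S j).2, (hmem j).2⟩ := by
          apply Subtype.ext
          exact SimpleGraph.ConnectedComponent.sound (hadj j).reachable
        rw [h1, h2, hcc]
      rw [hY]
      simp only [hω, if_false]
      exact (Finset.sum_eq_zero fun f _ => by simp [Set.indicator_apply, this f]).symm
  have hYint : ∫ ω, Y ω ∂μ = (k:ℝ) ^ C.card * ((k:ℝ)⁻¹) ^ V.card := by
    calc ∫ ω, Y ω ∂μ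
        = ∫ ω, (∑ f : {c // c ∈ C} → Fin k, (Ef f).indicator (fun _ => (1:ℝ)) ω) ∂μ := by
          exact integral_congr_ae (Filter.Eventually.of_forall hYsum)
      _ = ∑ f : {c // c ∈ C} → Fin k, ∫ ω, (Ef f).indicator (fun _ => (1:ℝ)) ω ∂μ :=
          integral_finset_sum _ (fun f _ => (integrable_const (1:ℝ)).indicator (hEfmeas f))
      _ = ∑ f : {c // c ∈ C} → Fin k, (μ (Ef f)).toReal := by
          refine Finset.sum_congr rfl fun f _ => ?_
          rw [integral_indicator_const _ (hEfmeas f), smul_eq_mul, mul_one, measureReal_def]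
      _ = (k:ℝ) ^ C.card * ((k:ℝ)⁻¹) ^ V.card := by
          rw [Finset.sum_congr rfl (fun f _ => by rw [hEfmu f]), Finset.sum_const,
            Finset.card_univ, Fintype.card_fun, Fintype.card_coe, Fintype.card_fin,
            nsmul_eq_mul]
          push_cast
          rw [ENNReal.toReal_pow, ENNReal.toReal_inv, ENNReal.toReal_natCast]
  rw [hYint]
  -- splitting into the two cases
  by_cases hOe : O = ∅
  · -- all degrees even
    have hXone : ∀ ω, X ω = 1 := fun ω => by rw [hX]; simp [hOe]
    have hXint : ∫ ω, X ω ∂μ = 1 := by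
      rw [integral_congr_ae (Filter.Eventually.of_forall hXone)]
      simp
    rw [hXint]
    have heven : ∀ v ∈ V, Even (deg S v) := by
      intro v hv
      by_contra h
      have : v ∈ O := Finset.mem_filter.2 ⟨hv, h⟩
      rw [hOe] at this
      exact absurd this (Finset.notMem_empty v)
    -- compute WEIGHT
    have hfib : ∀ c, compVer S c = V.filter (fun v => G.connectedComponentMk v = c) :=
      fun c => rfl
    have hWE : WEIGHT k x S = ∏ c ∈ C, (((k:ℝ) ^ ((compVer S c).card - 1))⁻¹ *
        ∏ v ∈ compVer S c, x v ^ deg S v) := by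
      rw [WEIGHT]
      refine Finset.prod_congr rfl fun c hc => ?_
      rw [if_pos]
      intro v hv
      exact heven v (Finset.mem_filter.1 ((hfib c) ▸ hv)).1
    have hcardsum : ∑ c ∈ C, (compVer S c).card = V.card := by
      rw [hC]
      rw [Finset.card_eq_sum_card_fiberwise
        (f := fun v => G.connectedComponentMk v) (t := C)
        (fun v hv => Finset.mem_image_of_mem _ hv)]
      exact Finset.sum_congr rfl fun c _ => by rw [hfib]
    have hpos : ∀ c ∈ C, 1 ≤ (compVer S c).card := by
      intro c hc
      obtain ⟨v, hvV, hvc⟩ := Finset.mem_image.1 hc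
      refine Finset.card_pos.2 ⟨v, ?_⟩
      rw [hfib]
      exact Finset.mem_filter.2 ⟨hvV, hvc⟩
    have hP2 : (∏ c ∈ C, ∏ v ∈ compVer S c, x v ^ deg S v) = P1 := by
      rw [hP1]
      rw [← Finset.prod_fiberwise_of_maps_to (g := fun v => G.connectedComponentMk v)
        (fun v hv => Finset.mem_image_of_mem _ hv) (fun v => x v ^ deg S v)]
      exact Finset.prod_congr rfl fun c _ => by rw [hfib]
    have hK : (∏ c ∈ C, ((k:ℝ) ^ ((compVer S c).card - 1))⁻¹)
        = (k:ℝ) ^ C.card * ((k:ℝ) ^ V.card)⁻¹ := by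
      have : ∀ c ∈ C, ((k:ℝ) ^ ((compVer S c).card - 1))⁻¹
          = (k:ℝ) * ((k:ℝ) ^ (compVer S c).card)⁻¹ := by
        intro c hc
        rw [pow_sub₀ _ hkR (hpos c hc), pow_one]
        field_simp
      rw [Finset.prod_congr rfl this, Finset.prod_mul_distrib, Finset.prod_const,
        Finset.prod_inv_distrib, Finset.prod_pow_eq_pow_sum, hcardsum]
    rw [hWE, Finset.prod_mul_distrib, hP2, hK, inv_pow]
    ring
  · -- some odd degree: both sides vanish
    obtain ⟨v0, hv0⟩ := Finset.nonempty_of_ne_empty hOe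
    have hXint : ∫ ω, X ω ∂μ = 0 := by
      have hOcard : O.card ≤ 4 * m :=
        le_trans (Finset.card_le_card (Finset.filter_subset _ _)) hVcard
      have hindO := hζi O hOcard
      set f : {v // v ∈ O} → Ω → ℝ := fun i ω => ζ ω ↑i with hf
      have hfm : ∀ i, Measurable (f i) := fun i => (measurable_pi_apply _).comp hζm
      set i0 : {v // v ∈ O} := ⟨v0, hv0⟩ with hi0
      have hip : IndepFun (∏ j ∈ Finset.univ.erase i0, f j) (f i0) μ :=
        hindO.indepFun_finsetProd_of_notMem hfm (Finset.notMem_erase _ _)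
      have hXeq : X = (∏ j ∈ Finset.univ.erase i0, f j) * f i0 := by
        funext ω
        show (∏ v ∈ O, ζ ω v) = (∏ j ∈ Finset.univ.erase i0, f j) ω * f i0 ω
        rw [Finset.prod_apply,
          Finset.prod_erase_mul _ _ (Finset.mem_univ i0)]
        exact (Finset.prod_coe_sort O (fun v => ζ ω v)).symm
      have hprodm : Measurable (∏ j ∈ Finset.univ.erase i0, f j) := by
        have : (∏ j ∈ Finset.univ.erase i0, f j)
            = fun ω => ∏ j ∈ Finset.univ.erase i0, f j ω := by
          funext ω; rw [Finset.prod_apply]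
        rw [this]
        exact Finset.measurable_prod _ (fun i _ => hfm i)
      have hz0 : ∫ ω, f i0 ω ∂μ = 0 :=
        aux_int_pm μ (f i0) (hfm i0) (fun ω => hζv ω v0) (hζu v0).1 (hζu v0).2
      calc ∫ ω, X ω ∂μ = ∫ ω, ((∏ j ∈ Finset.univ.erase i0, f j) * f i0) ω ∂μ := by
            rw [hXeq]
        _ = (∫ ω, (∏ j ∈ Finset.univ.erase i0, f j) ω ∂μ) * ∫ ω, f i0 ω ∂μ :=
            hip.integral_mul_eq_mul_integral hprodm.aestronglyMeasurable (hfm i0).aestronglyMeasurable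
        _ = 0 := by rw [hz0, mul_zero]
    rw [hXint]
    have hWE0 : WEIGHT k x S = 0 := by
      rw [WEIGHT]
      refine Finset.prod_eq_zero (Finset.mem_image_of_mem
        (fun v => G.connectedComponentMk v) (Finset.mem_filter.1 hv0).1) ?_
      rw [if_neg]
      intro hall
      have hv0' : v0 ∈ compVer S (G.connectedComponentMk v0) :=
        Finset.mem_filter.2 ⟨(Finset.mem_filter.1 hv0).1, rfl⟩
      exact (Finset.mem_filter.1 hv0).2 (hall v0 hv0')
    rw [hWE0]
    ring


end
end

section
/- Let C > 0 be a real number and suppose ‖x‖_∞ ≤ C^{−1/2}. Let i, t be positive integers with i ≤ d and let S ∈ W_{[i],t}. Then WEIGHT(G(S)) ≤ k^{−(i−t)} · C^{−(2m−i)} · SQUARES(Ver(G(S))). -/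
open Finset MeasureTheory ProbabilityTheory

noncomputable section

/-- Let `C > 0` with `‖x‖_∞ ≤ C^{-1/2}`, let `i, t ≥ 1` with `i ≤ d`, and
let `S ∈ W_{[i],t}`. Then `WEIGHT(G(S)) ≤ k^{-(i-t)} · C^{-(2m-i)} · SQUARES(Ver(G(S)))`. -/
theorem statement5 (d k m i t : ℕ) (hd : 0 < d) (hk : 0 < k) (hm : 0 < m)
    (hi : 0 < i) (ht : 0 < t) (hid : i ≤ d)
    (C : ℝ) (hC : 0 < C) (x : Fin d → ℝ) (hx : ∀ v, |x v| ≤ C ^ (-(1/2) : ℝ))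
    (S : Fin (2*m) → Fin d × Fin d) (hS : S ∈ W d m (seg d i) t) :
    WEIGHT k x S ≤
      (k : ℝ) ^ (-((i : ℤ) - (t : ℤ))) * C ^ (-(2*(m : ℤ) - (i : ℤ))) *
        SQUARES x (Ver S) := by
  classical
  obtain ⟨hSeq, hVer, hdeg, hcomp⟩ := hS
  -- cardinality of Ver S
  have hcard : (Ver S).card = i := by
    rw [hVer]
    have : (seg d i) = (univ : Finset (Fin i)).map (Fin.castLEEmb hid) := by
      ext v
      simp only [seg, mem_filter, mem_univ, true_and, mem_map, Fin.castLEEmb]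
      constructor
      · intro hv; exact ⟨⟨v, hv⟩, by simp [Fin.castLE]⟩
      · rintro ⟨w, rfl⟩; simp [Fin.castLE]
    rw [this, card_map]; simp
  set comps := (Ver S).image (fun v => (graphOf S).connectedComponentMk v) with hcomps
  have hcompcard : comps.card = t := hcomp
  have hmaps : ∀ v ∈ Ver S, (graphOf S).connectedComponentMk v ∈ comps :=
    fun v hv => mem_image_of_mem _ hv
  have hfiber : ∑ c ∈ comps, (compVer S c).card = i := by
    rw [← hcard]
    exact (Finset.card_eq_sum_card_fiberwise hmaps).symm
  have hcomp_pos : ∀ c ∈ comps, 1 ≤ (compVer S c).card := by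
    intro c hc
    obtain ⟨v, hv, rfl⟩ := Finset.mem_image.mp hc
    refine Finset.card_pos.mpr ⟨v, ?_⟩
    unfold compVer
    exact Finset.mem_filter.mpr ⟨hv, rfl⟩
  have hti : t ≤ i := by
    have : ∑ c ∈ comps, 1 ≤ ∑ c ∈ comps, (compVer S c).card :=
      Finset.sum_le_sum hcomp_pos
    rw [Finset.sum_const, smul_eq_mul, mul_one, hcompcard, hfiber] at this
    exact this
  -- degree facts
  have hge2 : ∀ v ∈ Ver S, 2 ≤ deg S v := by
    intro v hv
    obtain ⟨hpos, r, hr⟩ := hdeg v hv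
    omega
  have hdeg_sum : ∑ v ∈ Ver S, deg S v = 4 * m := by
    have h0 : ∀ v ∈ (univ : Finset (Fin d)), v ∉ Ver S → deg S v = 0 := by
      intro v _ hv
      simp only [Ver, mem_filter, mem_univ, true_and, not_exists, not_or] at hv
      unfold deg
      rw [Finset.filter_eq_empty_iff.mpr (fun j _ => (hv j).1),
        Finset.filter_eq_empty_iff.mpr (fun j _ => (hv j).2)]
      simp
    rw [Finset.sum_subset (Finset.subset_univ _) h0]
    unfold deg
    rw [Finset.sum_add_distrib]
    have hA : ∑ v : Fin d, (univ.filter (fun j => (S j).1 = v)).card = 2 * m := by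
      rw [← Finset.card_eq_sum_card_fiberwise (fun j (_ : j ∈ univ) => Finset.mem_univ ((S j).1))]
      simp
    have hB : ∑ v : Fin d, (univ.filter (fun j => (S j).2 = v)).card = 2 * m := by
      rw [← Finset.card_eq_sum_card_fiberwise (fun j (_ : j ∈ univ) => Finset.mem_univ ((S j).2))]
      simp
    rw [hA, hB]; ring
  have him : 2 * i ≤ 4 * m := by
    have : ∑ v ∈ Ver S, 2 ≤ ∑ v ∈ Ver S, deg S v := Finset.sum_le_sum hge2
    rw [Finset.sum_const, smul_eq_mul, hcard, hdeg_sum] at this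
    omega
  -- rewrite WEIGHT
  have hW : WEIGHT k x S =
      ((k:ℝ) ^ (i - t))⁻¹ * ∏ v ∈ Ver S, x v ^ deg S v := by
    unfold WEIGHT
    rw [← hcomps]
    refine (Finset.prod_congr rfl fun c hc =>
      if_pos fun v hv => (hdeg v (Finset.mem_filter.mp hv).1).2).trans ?_
    rw [Finset.prod_mul_distrib]
    congr 1
    · rw [Finset.prod_inv_distrib, Finset.prod_pow_eq_pow_sum]
      congr 2
      have hsum : ∑ c ∈ comps, ((compVer S c).card - 1) + ∑ c ∈ comps, 1
          = ∑ c ∈ comps, (compVer S c).card := by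
        rw [← Finset.sum_add_distrib]
        exact Finset.sum_congr rfl (fun c hc => by have := hcomp_pos c hc; omega)
      rw [Finset.sum_const, smul_eq_mul, mul_one, hcompcard, hfiber] at hsum
      omega
    · exact Finset.prod_fiberwise_of_maps_to hmaps _
  -- pointwise bound
  set c0 : ℝ := C ^ (-(1/2) : ℝ) with hc0
  have hc0_nonneg : 0 ≤ c0 := Real.rpow_nonneg hC.le _
  have hpoint : ∀ v ∈ Ver S, x v ^ deg S v ≤ c0 ^ (deg S v - 2) * x v ^ 2 := by
    intro v hv
    have h2 : 2 ≤ deg S v := hge2 v hv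
    have heven : Even (deg S v) := (hdeg v hv).2
    have heven2 : Even (deg S v - 2) := by
      obtain ⟨r, hr⟩ := heven; exact ⟨r - 1, by omega⟩
    have hsplit : x v ^ deg S v = x v ^ (deg S v - 2) * x v ^ 2 := by
      rw [← pow_add]; congr 1; omega
    rw [hsplit]
    refine mul_le_mul_of_nonneg_right ?_ (sq_nonneg _)
    calc x v ^ (deg S v - 2) = |x v| ^ (deg S v - 2) := (heven2.pow_abs _).symm
      _ ≤ c0 ^ (deg S v - 2) := pow_le_pow_left₀ (abs_nonneg _) (hx v) _
  have hprod : ∏ v ∈ Ver S, x v ^ deg S v ≤ c0 ^ (4*m - 2*i) * SQUARES x (Ver S) := by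
    have h1 : ∏ v ∈ Ver S, x v ^ deg S v
        ≤ ∏ v ∈ Ver S, (c0 ^ (deg S v - 2) * x v ^ 2) :=
      Finset.prod_le_prod (fun v hv => (hdeg v hv).2.pow_nonneg _) hpoint
    have hsum2 : ∑ v ∈ Ver S, (deg S v - 2) = 4*m - 2*i := by
      have h3 : ∑ v ∈ Ver S, (deg S v - 2 + 2) = ∑ v ∈ Ver S, deg S v :=
        Finset.sum_congr rfl (fun v hv => by have := hge2 v hv; omega)
      rw [Finset.sum_add_distrib, Finset.sum_const, smul_eq_mul, hcard, hdeg_sum] at h3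
      omega
    calc ∏ v ∈ Ver S, x v ^ deg S v
        ≤ ∏ v ∈ Ver S, (c0 ^ (deg S v - 2) * x v ^ 2) := h1
      _ = (∏ v ∈ Ver S, c0 ^ (deg S v - 2)) * ∏ v ∈ Ver S, x v ^ 2 :=
          Finset.prod_mul_distrib
      _ = c0 ^ (4*m - 2*i) * SQUARES x (Ver S) := by
          rw [Finset.prod_pow_eq_pow_sum, hsum2]; rfl
  -- exponent conversions
  have hcC : c0 ^ (4*m - 2*i) = C ^ (-(2*(m:ℤ) - (i:ℤ))) := by
    rw [hc0, ← Real.rpow_natCast (C ^ (-(1/2) : ℝ)) (4*m - 2*i), ← Real.rpow_mul hC.le,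
      ← Real.rpow_intCast C (-(2*(m:ℤ) - (i:ℤ)))]
    congr 1
    rw [Nat.cast_sub him]
    push_cast
    ring
  have hkinv : ((k:ℝ) ^ (i - t))⁻¹ = (k:ℝ) ^ (-((i:ℤ) - (t:ℤ))) := by
    rw [← zpow_natCast (k:ℝ) (i - t), ← zpow_neg]
    congr 1
    omega
  have hKnn : (0:ℝ) ≤ ((k:ℝ) ^ (i - t))⁻¹ := by positivity
  rw [hW]
  calc ((k:ℝ) ^ (i - t))⁻¹ * ∏ v ∈ Ver S, x v ^ deg S v
      ≤ ((k:ℝ) ^ (i - t))⁻¹ * (c0 ^ (4*m - 2*i) * SQUARES x (Ver S)) :=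
        mul_le_mul_of_nonneg_left hprod hKnn
    _ = (k:ℝ) ^ (-((i:ℤ) - (t:ℤ))) * C ^ (-(2*(m:ℤ) - (i:ℤ))) * SQUARES x (Ver S) := by
        rw [hcC, hkinv]; ring

end
end

section
/- There exist absolute constants υ ≥ 1, CONST ≥ 1 and a positive integer m₀ such that the following holds: for every integer m ≥ m₀, every real F with 1 ≤ F ≤ υ·log(m)/log(log(m)), every positive integer d, and all integers i, t with 1 ≤ i ≤ 2m, i ≤ d, 1 ≤ t ≤ i/2 and t < 0.39·i, one has |W_{[i],t}| ≤ CONST^{2m} · i! · m^{4m+i−5t} · (1/F)^{4m−2i}. -/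
open Finset MeasureTheory ProbabilityTheory

noncomputable section

lemma pow_self_le_exp_mul_factorial (n : ℕ) :
    (n : ℝ) ^ n ≤ Real.exp n * n.factorial := by
  have h := Real.pow_div_factorial_le_exp (x := (n:ℝ)) (Nat.cast_nonneg n) n
  have hfac : (0:ℝ) < (n.factorial : ℝ) := by exact_mod_cast n.factorial_pos
  rw [div_le_iff₀ hfac] at h
  simpa [mul_comm] using h

lemma count_W_le {d m i t : ℕ} :
    (W d m (seg d i) t).ncard ≤ (i * i) ^ (2 * m) := by
  classical
  have key : ∀ S ∈ W d m (seg d i) t, ∀ j : Fin (2*m),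
      (S j).1.val < i ∧ (S j).2.val < i := by
    intro S hS j
    obtain ⟨-, hVer, -, -⟩ := hS
    constructor
    · have h1 : (S j).1 ∈ Ver S :=
        Finset.mem_filter.2 ⟨Finset.mem_univ _, ⟨j, Or.inl rfl⟩⟩
      rw [hVer] at h1; simpa [seg] using h1
    · have h2 : (S j).2 ∈ Ver S :=
        Finset.mem_filter.2 ⟨Finset.mem_univ _, ⟨j, Or.inr rfl⟩⟩
      rw [hVer] at h2; simpa [seg] using h2
  set f : (W d m (seg d i) t) → (Fin (2*m) → Fin i × Fin i) := fun S j =>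
    (⟨(S.1 j).1.val, (key S.1 S.2 j).1⟩, ⟨(S.1 j).2.val, (key S.1 S.2 j).2⟩) with hf_def
  have hf : Function.Injective f := by
    intro S S' h
    apply Subtype.ext
    funext j
    have hj := congrFun h j
    simp only [hf_def, Prod.mk.injEq, Fin.mk.injEq] at hj
    have h1 : (S.1 j).1 = (S'.1 j).1 := Fin.val_injective hj.1
    have h2 : (S.1 j).2 = (S'.1 j).2 := Fin.val_injective hj.2
    exact Prod.ext h1 h2
  have hcard := Nat.card_le_card_of_injective f hf
  rwa [Nat.card_coe_set_eq, Nat.card_eq_fintype_card, Fintype.card_fun,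
    Fintype.card_prod, Fintype.card_fin, Fintype.card_fin] at hcard

set_option maxHeartbeats 1000000 in
set_option maxHeartbeats 1000000 in
/-- (Counting lemma, small `t`.) There are absolute constants
`υ, CONST ≥ 1` and `m₀ ≥ 1` such that for every integer `m ≥ m₀`, every real
`1 ≤ F ≤ υ·log m/log log m`, every `d ≥ 1` and all integers `i, t` with `1 ≤ i ≤ 2m`,
`i ≤ d`, `1 ≤ t ≤ i/2` and `t < 0.39·i`:
`|W_{[i],t}| ≤ CONST^{2m} · i! · m^{4m+i-5t} · (1/F)^{4m-2i}`. -/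
theorem statement11 :
    ∃ (υ CONST : ℝ) (m₀ : ℕ), 1 ≤ υ ∧ 1 ≤ CONST ∧ 0 < m₀ ∧
      ∀ (m : ℕ), m₀ ≤ m →
      ∀ (F : ℝ), 1 ≤ F → F ≤ υ * Real.log m / Real.log (Real.log m) →
      ∀ (d : ℕ), 0 < d →
      ∀ (i t : ℕ), 1 ≤ i → i ≤ 2*m → i ≤ d →
      1 ≤ t → 2*t ≤ i → (t : ℝ) < 0.39 * (i : ℝ) →
        ((W d m (seg d i) t).ncard : ℝ) ≤
          CONST ^ (2*m) * (i.factorial : ℝ) *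
            (m : ℝ) ^ (4*(m : ℤ) + (i : ℤ) - 5*(t : ℤ)) *
            (F⁻¹) ^ (4*(m : ℤ) - 2*(i : ℤ)) := by
  refine ⟨1, 2 * Real.exp 1, ⌈Real.exp (Real.exp 80)⌉₊ + 1, le_refl 1, ?_, Nat.succ_pos _, ?_⟩
  · have h1 : (1:ℝ) ≤ Real.exp 1 := Real.one_le_exp zero_le_one
    linarith
  intro m hm F hF1 hFL d hd i t hi1 hi2m hid ht1 h2t ht39
  have hm0R : Real.exp (Real.exp 80) ≤ (m:ℝ) := by
    have h1 : (⌈Real.exp (Real.exp 80)⌉₊ : ℝ) ≤ (m:ℝ) := by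
      exact_mod_cast Nat.le_of_succ_le hm
    exact le_trans (Nat.le_ceil _) h1
  -- nat arithmetic
  have h39 : 100 * t < 39 * i := by
    have h : (100 * (t:ℝ)) < 39 * (i:ℝ) := by nlinarith [ht39]
    exact_mod_cast h
  set s : ℕ := i / 20 + 1 with hs_def
  have hts : 5 * t + s ≤ 2 * i := by omega
  have h20s : i ≤ 20 * s := by omega
  have hi2 : 2 ≤ i := by omega
  have h2i4m : 2 * i ≤ 4 * m := by omega
  set N1 : ℕ := 4 * m + i - 5 * t with hN1_def
  set N2 : ℕ := 4 * m - 2 * i with hN2_def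
  have hN1cast : 4*(m : ℤ) + (i:ℤ) - 5*(t:ℤ) = (N1 : ℤ) := by omega
  have hN2cast : 4*(m : ℤ) - 2*(i:ℤ) = (N2 : ℤ) := by omega
  set M : ℝ := (m:ℝ) with hM_def
  set I : ℝ := (i:ℝ) with hI_def
  set lg : ℝ := Real.log M with hlg_def
  set llg : ℝ := Real.log lg with hllg_def
  rw [one_mul] at hFL
  set L : ℝ := lg / llg with hL_def
  have hM1 : (1:ℝ) ≤ M := le_trans (Real.one_le_exp (Real.exp_pos 80).le) hm0R
  have hM0 : (0:ℝ) < M := lt_of_lt_of_le one_pos hM1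
  have hlg_ge : Real.exp 80 ≤ lg := by
    have h := Real.log_le_log (Real.exp_pos _) hm0R
    rwa [Real.log_exp] at h
  have hlg0 : 0 < lg := lt_of_lt_of_le (Real.exp_pos 80) hlg_ge
  have hllg80 : (80:ℝ) ≤ llg := by
    have h := Real.log_le_log (Real.exp_pos 80) hlg_ge
    rwa [Real.log_exp] at h
  have hllg0 : (0:ℝ) < llg := by linarith
  have hFL' : F ≤ L := hFL
  have hL1 : (1:ℝ) ≤ L := le_trans hF1 hFL'
  have hL0 : (0:ℝ) < L := lt_of_lt_of_le one_pos hL1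
  have hLllg : L * llg = lg := div_mul_cancel₀ _ (ne_of_gt hllg0)
  have h80L : 80 * L ≤ lg := by nlinarith
  have hI0 : (0:ℝ) < I := by
    rw [hI_def]; exact_mod_cast Nat.pos_of_ne_zero (by omega)
  have hI2M : I ≤ 2 * M := by rw [hI_def, hM_def]; exact_mod_cast hi2m
  rw [hN1cast, hN2cast, zpow_natCast, zpow_natCast, inv_pow, ← div_eq_mul_inv,
    le_div_iff₀ (by positivity)]
  have hF0 : (0:ℝ) ≤ F := by linarith
  have hcount : ((W d m (seg d i) t).ncard : ℝ) ≤ I ^ (4*m) := by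
    have h := count_W_le (d := d) (m := m) (i := i) (t := t)
    calc ((W d m (seg d i) t).ncard : ℝ) ≤ (((i*i)^(2*m) : ℕ) : ℝ) := by exact_mod_cast h
    _ = I ^ (4*m) := by rw [hI_def]; push_cast; ring
  have hFpow : F ^ N2 ≤ L ^ N2 := pow_le_pow_left₀ hF0 hFL' N2
  have main : I ^ (4*m) * L ^ N2 ≤
      (2 * Real.exp 1) ^ (2*m) * (i.factorial : ℝ) * M ^ N1 := by
    have hMi : (0:ℝ) < M ^ i := by positivity
    rw [← mul_le_mul_iff_of_pos_right hMi]
    have hstep : I^(4*m) * L^N2 * M^i ≤ 2^(2*m) * I^i * M^(4*m+s) := by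
      rcases le_or_gt (I * L) M with hA | hB
      · have hIM : I ≤ M := by nlinarith
        have e4m : 4*m = N2 + 2*i := by omega
        have step1 : I^(4*m) * L^N2 * M^i = (I*L)^N2 * (I^i * I^i * M^i) := by
          rw [e4m]; ring
        have step2 : (I*L)^N2 * (I^i * I^i * M^i) ≤ M^N2 * (I^i * M^i * M^i) := by
          have h1 : (I*L)^N2 ≤ M^N2 := pow_le_pow_left₀ (by positivity) hA N2
          have h2 : I^i ≤ M^i := pow_le_pow_left₀ hI0.le hIM i
          have h3 : I^i * I^i * M^i ≤ I^i * M^i * M^i := by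
            have h4 : I^i * M^i ≤ M^i * M^i := mul_le_mul_of_nonneg_right h2 hMi.le
            calc I^i * I^i * M^i = I^i * (I^i * M^i) := by ring
              _ ≤ I^i * (M^i * M^i) := mul_le_mul_of_nonneg_left h4 (by positivity)
              _ = I^i * M^i * M^i := by ring
          exact mul_le_mul h1 h3 (by positivity) (by positivity)
        have step3 : M^N2 * (I^i * M^i * M^i) = I^i * M^(4*m) := by
          rw [e4m]; ring
        have step4 : I^i * M^(4*m) ≤ 2^(2*m) * I^i * M^(4*m+s) := by
          have h1 : (1:ℝ) ≤ 2^(2*m) := one_le_pow₀ one_le_two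
          have h2 : M^(4*m) ≤ M^(4*m+s) := pow_le_pow_right₀ hM1 (Nat.le_add_right _ _)
          calc I^i * M^(4*m) = 1 * (I^i * M^(4*m)) := by ring
            _ ≤ 2^(2*m) * (I^i * M^(4*m+s)) := by
                refine mul_le_mul h1 ?_ (by positivity) (by positivity)
                exact mul_le_mul_of_nonneg_left h2 (by positivity)
            _ = 2^(2*m) * I^i * M^(4*m+s) := by ring
        calc I^(4*m) * L^N2 * M^i = (I*L)^N2 * (I^i * I^i * M^i) := step1
          _ ≤ M^N2 * (I^i * M^i * M^i) := step2
          _ = I^i * M^(4*m) := step3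
          _ ≤ 2^(2*m) * I^i * M^(4*m+s) := step4
      · -- case B : logarithms
        have hpos1 : (0:ℝ) < I^(4*m) * L^N2 * M^i := by positivity
        have hpos2 : (0:ℝ) < 2^(2*m) * I^i * M^(4*m+s) := by positivity
        rw [← Real.log_le_log_iff hpos1 hpos2,
          Real.log_mul (by positivity) (by positivity),
          Real.log_mul (by positivity) (by positivity),
          Real.log_mul (by positivity) (by positivity),
          Real.log_mul (by positivity) (by positivity)]
        simp only [Real.log_pow]
        have hlog2 : (0:ℝ) ≤ Real.log 2 := Real.log_nonneg one_le_two
        have hlogI_le : Real.log I ≤ Real.log 2 + lg := by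
          have h := Real.log_le_log hI0 hI2M
          rwa [Real.log_mul two_ne_zero (ne_of_gt hM0)] at h
        have b1 : I * (Real.log I - lg) ≤ 2 * M * Real.log 2 := by
          have h1 : I * (Real.log I - lg) ≤ I * Real.log 2 :=
            mul_le_mul_of_nonneg_left (by linarith) hI0.le
          have h2 : I * Real.log 2 ≤ 2 * M * Real.log 2 :=
            mul_le_mul_of_nonneg_right hI2M hlog2
          linarith
        have hN2R : (N2:ℝ) = 4*M - 2*I := by
          rw [hN2_def, hM_def, hI_def, Nat.cast_sub h2i4m]; push_cast; ring
        have b2 : (4*M - 2*I) * (Real.log I + Real.log L - lg) ≤ (s:ℝ) * lg := by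
          have hw1 : 1 < I * L / M := (one_lt_div hM0).2 hB
          have hv_eq : Real.log (I * L / M) = Real.log I + Real.log L - lg := by
            rw [Real.log_div (by positivity) (ne_of_gt hM0),
              Real.log_mul (ne_of_gt hI0) (ne_of_gt hL0)]
          have hv0 : (0:ℝ) < Real.log I + Real.log L - lg := by
            rw [← hv_eq]; exact Real.log_pos hw1
          have hvle : Real.log I + Real.log L - lg ≤ I * L / M := by
            rw [← hv_eq]
            linarith [Real.log_le_sub_one_of_pos (lt_trans one_pos hw1)]
          have hN2le : 4*M - 2*I ≤ 4 * M := by linarith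
          have h1 : (4*M - 2*I) * (Real.log I + Real.log L - lg) ≤
              4 * M * (Real.log I + Real.log L - lg) :=
            mul_le_mul_of_nonneg_right hN2le hv0.le
          have h2 : 4 * M * (Real.log I + Real.log L - lg) ≤ 4 * M * (I*L/M) :=
            mul_le_mul_of_nonneg_left hvle (by positivity)
          have h3 : 4 * M * (I*L/M) = 4 * I * L := by field_simp
          have h4 : 4 * I * L ≤ (s:ℝ) * lg := by
            have h5 : I * (80 * L) ≤ I * lg := mul_le_mul_of_nonneg_left h80L hI0.le
            have h6 : I ≤ 20 * (s:ℝ) := by rw [hI_def]; exact_mod_cast h20s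
            have h7 : I * lg ≤ 20 * (s:ℝ) * lg := mul_le_mul_of_nonneg_right h6 hlg0.le
            nlinarith [h5, h7]
          linarith
        rw [hN2R]
        push_cast at b2 ⊢
        rw [← hM_def, ← hI_def, ← hlg_def]
        linarith [b1, b2]
    have hfac : I ^ i ≤ Real.exp 1 ^ (2*m) * (i.factorial : ℝ) := by
      have h1 : I ^ i ≤ Real.exp i * i.factorial := by
        rw [hI_def]; exact pow_self_le_exp_mul_factorial i
      have h2 : Real.exp (i:ℝ) ≤ Real.exp 1 ^ (2*m) := by
        rw [← Real.exp_nat_mul]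
        apply Real.exp_le_exp.2
        have hcast : ((i:ℕ):ℝ) ≤ ((2*m:ℕ):ℝ) := by exact_mod_cast hi2m
        push_cast at hcast ⊢
        linarith
      have hfp : (0:ℝ) ≤ (i.factorial : ℝ) := by positivity
      calc I^i ≤ Real.exp i * i.factorial := h1
        _ ≤ Real.exp 1 ^ (2*m) * i.factorial := mul_le_mul_of_nonneg_right h2 hfp
    have hMN : M ^ (4*m+s) ≤ M ^ (N1+i) := pow_le_pow_right₀ hM1 (by omega)
    calc I^(4*m) * L^N2 * M^i ≤ 2^(2*m) * I^i * M^(4*m+s) := hstep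
      _ ≤ 2^(2*m) * (Real.exp 1 ^ (2*m) * i.factorial) * M^(N1+i) := by
          have h1 : 2^(2*m) * I^i ≤ 2^(2*m) * (Real.exp 1 ^ (2*m) * i.factorial) :=
            mul_le_mul_of_nonneg_left hfac (by positivity)
          exact mul_le_mul h1 hMN (by positivity) (by positivity)
      _ = (2*Real.exp 1)^(2*m) * i.factorial * M^N1 * M^i := by
          rw [mul_pow, pow_add]; ring
  calc ((W d m (seg d i) t).ncard : ℝ) * F ^ N2
      ≤ I ^ (4*m) * L ^ N2 := mul_le_mul hcount hFpow (by positivity) (by positivity)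
    _ ≤ (2 * Real.exp 1) ^ (2*m) * (i.factorial : ℝ) * M ^ N1 := main


end
end

section
/- Let i, t be positive integers with 3t > i and i ≤ d. Then W_{[i],t} ⊆ SPARSE_{3t−i}. -/
open Finset MeasureTheory ProbabilityTheory

noncomputable section

open scoped Classical in
/-- The number of connected components of `G(S)` whose vertex set consists of exactly
`2` vertices. -/
def numTwoComp {d m : ℕ} (S : Fin (2*m) → Fin d × Fin d) : ℕ :=
  (((Ver S).image (fun v => (graphOf S).connectedComponentMk v)).filter
    (fun c => (compVer S c).card = 2)).card

/-- `SPARSE_u` (for a fixed `i`): the set of sequences `S` with `Ver(G(S)) = [i]`, all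
degrees of `G(S)` positive and even, and at least `u` connected components of `G(S)`
having a vertex set of size exactly `2`. -/
def SPARSE (d m i u : ℕ) : Set (Fin (2*m) → Fin d × Fin d) :=
  {S | S ∈ Seqs d m ∧ Ver S = seg d i ∧
    (∀ v ∈ Ver S, 0 < deg S v ∧ Even (deg S v)) ∧ u ≤ numTwoComp S}

/-- Let `i, t ≥ 1` with `3t > i` and `i ≤ d`. Then
`W_{[i],t} ⊆ SPARSE_{3t-i}`. -/
theorem statement13 (d m i t : ℕ) (hd : 0 < d) (hm : 0 < m) (hi : 0 < i) (ht : 0 < t)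
    (hid : i ≤ d) (hit : i < 3*t) :
    W d m (seg d i) t ⊆ SPARSE d m i (3*t - i) := by
  classical
  intro S hS
  obtain ⟨hSeq, hVer, hdeg, hcomp⟩ := hS
  refine ⟨hSeq, hVer, hdeg, ?_⟩
  set C := (Ver S).image (fun v => (graphOf S).connectedComponentMk v) with hC
  have hVcard : (Ver S).card = i := by
    rw [hVer, seg]
    have : Finset.filter (fun v : Fin d => (v : ℕ) < i) Finset.univ
        = Finset.map (Fin.castLEEmb hid) Finset.univ := by
      ext v
      simp only [Finset.mem_filter, Finset.mem_univ, true_and, Finset.mem_map,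
        Fin.castLEEmb_apply]
      constructor
      · intro hv
        exact ⟨⟨(v : ℕ), hv⟩, by ext; simp⟩
      · rintro ⟨w, rfl⟩
        exact w.isLt
    rw [this, Finset.card_map, Finset.card_univ, Fintype.card_fin]
  have hsum : ∑ c ∈ C, (compVer S c).card = (Ver S).card :=
    (Finset.card_eq_sum_card_fiberwise
      (fun x hx => Finset.mem_image_of_mem _ hx)).symm
  have hadj : ∀ v ∈ Ver S, ∃ w ∈ Ver S, (graphOf S).Adj v w := by
    intro v hv
    simp only [Ver, Finset.mem_filter, Finset.mem_univ, true_and] at hv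
    obtain ⟨j, hj | hj⟩ := hv
    · refine ⟨(S j).2, ?_, ?_, j, Or.inl ?_⟩
      · simp only [Ver, Finset.mem_filter, Finset.mem_univ, true_and]
        exact ⟨j, Or.inr rfl⟩
      · have := hSeq j
        rw [hj] at this
        exact (this.ne)
      · rw [← hj]
    · refine ⟨(S j).1, ?_, ?_, j, Or.inr ?_⟩
      · simp only [Ver, Finset.mem_filter, Finset.mem_univ, true_and]
        exact ⟨j, Or.inl rfl⟩
      · have := hSeq j
        rw [hj] at this
        exact this.ne'
      · rw [← hj]
  have hcard2 : ∀ c ∈ C, 2 ≤ (compVer S c).card := by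
    intro c hc
    obtain ⟨v, hv, rfl⟩ := Finset.mem_image.mp hc
    obtain ⟨w, hw, hadjvw⟩ := hadj v hv
    have hsub : ({v, w} : Finset (Fin d)) ⊆ compVer S ((graphOf S).connectedComponentMk v) := by
      intro x hx
      simp only [Finset.mem_insert, Finset.mem_singleton] at hx
      rcases hx with rfl | rfl
      · exact Finset.mem_filter.mpr ⟨hv, rfl⟩
      · exact Finset.mem_filter.mpr ⟨hw,
          SimpleGraph.ConnectedComponent.sound hadjvw.symm.reachable⟩
    calc 2 = ({v, w} : Finset (Fin d)).card := (Finset.card_pair hadjvw.ne).symm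
    _ ≤ _ := Finset.card_le_card hsub
  have hCcard : C.card = t := hcomp
  set F := C.filter (fun c => (compVer S c).card = 2) with hF
  have hk : numTwoComp S = F.card := rfl
  have hsplit : F.card + (C.filter (fun c => ¬ (compVer S c).card = 2)).card = t := by
    rw [Finset.card_filter_add_card_filter_not, hCcard]
  have hsumF : ∑ c ∈ F, (compVer S c).card = 2 * F.card := by
    rw [Finset.sum_congr rfl (fun c hc => (Finset.mem_filter.mp hc).2),
      Finset.sum_const, smul_eq_mul, mul_comm]
  have hsumG : 3 * (C.filter (fun c => ¬ (compVer S c).card = 2)).card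
      ≤ ∑ c ∈ C.filter (fun c => ¬ (compVer S c).card = 2), (compVer S c).card := by
    rw [mul_comm, ← smul_eq_mul, ← Finset.sum_const]
    refine Finset.sum_le_sum (fun c hc => ?_)
    have h1 := hcard2 c (Finset.mem_filter.mp hc).1
    have h2 := (Finset.mem_filter.mp hc).2
    omega
  have htotal : ∑ c ∈ F, (compVer S c).card
      + ∑ c ∈ C.filter (fun c => ¬ (compVer S c).card = 2), (compVer S c).card = i := by
    rw [Finset.sum_filter_add_sum_filter_not, hsum, hVcard]
  omega

end
end

section
/- There exist absolute constants υ ≥ 1, CONST ≥ 1 and a positive integer m₀ such that the following holds: for every integer m ≥ m₀, every real F with 1 ≤ F ≤ υ·log(m)/log(log(m)), every positive integer d, and all integers i, t with 1 ≤ i ≤ 2m, i ≤ d, 1 ≤ t ≤ i/2, and (i−2t)² < 2(3t−i), one has |W_{[i],t}| ≤ CONST^{2m} · i! · m^{4m+i−5t} · (1/F)^{4m−2i}. -/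
open Finset MeasureTheory ProbabilityTheory

noncomputable section

open scoped Classical

namespace S19

variable {d m : ℕ}

/-- component finset of v inside Ver S -/
def compF (S : Fin (2*m) → Fin d × Fin d) (v : Fin d) : Finset (Fin d) :=
  (Ver S).filter (fun u => (graphOf S).connectedComponentMk u = (graphOf S).connectedComponentMk v)

lemma self_mem_compF {S : Fin (2*m) → Fin d × Fin d} {v : Fin d} (h : v ∈ Ver S) :
    v ∈ compF S v := Finset.mem_filter.mpr ⟨h, rfl⟩

/-- leader function: min of component -/
def psiF (S : Fin (2*m) → Fin d × Fin d) (v : Fin d) : Fin d :=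
  if h : v ∈ Ver S then (compF S v).min' ⟨v, self_mem_compF h⟩ else v

lemma compF_congr {S : Fin (2*m) → Fin d × Fin d} {u v : Fin d}
    (h : (graphOf S).connectedComponentMk u = (graphOf S).connectedComponentMk v) :
    compF S u = compF S v := by
  unfold compF; apply Finset.filter_congr; intro w _; rw [h]

lemma psiF_spec {S : Fin (2*m) → Fin d × Fin d} {v : Fin d} (h : v ∈ Ver S) :
    psiF S v ∈ compF S v := by
  rw [psiF, dif_pos h]; exact Finset.min'_mem _ _

lemma psiF_mem_Ver {S : Fin (2*m) → Fin d × Fin d} {v : Fin d} (h : v ∈ Ver S) :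
    psiF S v ∈ Ver S := (Finset.mem_filter.mp (psiF_spec h)).1

lemma cmk_psiF {S : Fin (2*m) → Fin d × Fin d} {v : Fin d} (h : v ∈ Ver S) :
    (graphOf S).connectedComponentMk (psiF S v) = (graphOf S).connectedComponentMk v :=
  (Finset.mem_filter.mp (psiF_spec h)).2

lemma psiF_congr {S : Fin (2*m) → Fin d × Fin d} {u v : Fin d} (hu : u ∈ Ver S) (hv : v ∈ Ver S)
    (h : (graphOf S).connectedComponentMk u = (graphOf S).connectedComponentMk v) :
    psiF S u = psiF S v := by
  have hc : compF S u = compF S v := compF_congr h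
  rw [psiF, psiF, dif_pos hu, dif_pos hv]
  congr 1

lemma psiF_idem {S : Fin (2*m) → Fin d × Fin d} {v : Fin d} (h : v ∈ Ver S) :
    psiF S (psiF S v) = psiF S v := by
  have h1 : psiF S v ∈ Ver S := psiF_mem_Ver h
  have h2 := psiF_congr h1 h (cmk_psiF h)
  exact h2


/-- the finset of "leader-like" functions -/
def Psi (Q : Finset (Fin d)) (t : ℕ) : Finset (Fin d → Fin d) :=
  univ.filter (fun ψ => (∀ v, v ∉ Q → ψ v = v) ∧ (∀ v ∈ Q, ψ v ∈ Q ∧ ψ (ψ v) = ψ v) ∧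
    ((Q.filter (fun v => ψ v = v)).card = t) ∧
    (∀ u ∈ Q, ψ u = u → 2 ≤ (Q.filter (fun v => ψ v = u)).card))

def Epairs (Q : Finset (Fin d)) (ψ : Fin d → Fin d) : Finset (Fin d × Fin d) :=
  (Q ×ˢ Q).filter (fun p => ψ p.1 = ψ p.2)

variable {Q : Finset (Fin d)} {t : ℕ} {S : Fin (2*m) → Fin d × Fin d}

lemma fst_mem_Ver (S : Fin (2*m) → Fin d × Fin d) (j : Fin (2*m)) : (S j).1 ∈ Ver S :=
  Finset.mem_filter.mpr ⟨Finset.mem_univ _, ⟨j, Or.inl rfl⟩⟩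

lemma snd_mem_Ver (S : Fin (2*m) → Fin d × Fin d) (j : Fin (2*m)) : (S j).2 ∈ Ver S :=
  Finset.mem_filter.mpr ⟨Finset.mem_univ _, ⟨j, Or.inr rfl⟩⟩

lemma adj_of_slot (hSeq : S ∈ Seqs d m) (j : Fin (2*m)) :
    (graphOf S).Adj (S j).1 (S j).2 :=
  ⟨(hSeq j).ne, j, Or.inl rfl⟩

lemma cmk_slot (hSeq : S ∈ Seqs d m) (j : Fin (2*m)) :
    (graphOf S).connectedComponentMk (S j).1 = (graphOf S).connectedComponentMk (S j).2 :=
  SimpleGraph.ConnectedComponent.sound (adj_of_slot hSeq j).reachable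

/-- V1: each slot lands in Epairs -/
lemma slot_mem_Epairs (hSeq : S ∈ Seqs d m) (hVer : Ver S = Q) (j : Fin (2*m)) :
    S j ∈ Epairs Q (psiF S) := by
  refine Finset.mem_filter.mpr ⟨Finset.mem_product.mpr ⟨?_, ?_⟩, ?_⟩
  · exact hVer ▸ fst_mem_Ver S j
  · exact hVer ▸ snd_mem_Ver S j
  · exact psiF_congr (fst_mem_Ver S j) (snd_mem_Ver S j) (cmk_slot hSeq j)

/-- V2: psiF S lands in Psi -/
lemma psiF_mem_Psi (hSeq : S ∈ Seqs d m) (hVer : Ver S = Q) (hnum : numComp S = t) :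
    psiF S ∈ Psi Q t := by
  subst hVer
  refine Finset.mem_filter.mpr ⟨Finset.mem_univ _, ?_, ?_, ?_, ?_⟩
  · intro v hv; rw [psiF, dif_neg hv]
  · intro v hv; exact ⟨psiF_mem_Ver hv, psiF_idem hv⟩
  · -- card of fixed points = t
    have hinj : Set.InjOn (fun v => (graphOf S).connectedComponentMk v)
        ↑((Ver S).filter (fun v => psiF S v = v)) := by
      intro u₁ h₁ u₂ h₂ hc
      simp only [Finset.coe_filter, Set.mem_setOf_eq] at h₁ h₂
      calc u₁ = psiF S u₁ := h₁.2.symm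
        _ = psiF S u₂ := psiF_congr h₁.1 h₂.1 hc
        _ = u₂ := h₂.2
    have himg : ((Ver S).filter (fun v => psiF S v = v)).image
        (fun v => (graphOf S).connectedComponentMk v)
        = (Ver S).image (fun v => (graphOf S).connectedComponentMk v) := by
      apply Finset.Subset.antisymm
      · exact Finset.image_subset_image (Finset.filter_subset _ _)
      · intro c hc
        obtain ⟨v, hv, rfl⟩ := Finset.mem_image.mp hc
        refine Finset.mem_image.mpr ⟨psiF S v, ?_, cmk_psiF hv⟩
        exact Finset.mem_filter.mpr ⟨psiF_mem_Ver hv, psiF_idem hv⟩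
    rw [← hnum]
    rw [numComp, ← himg]
    exact (Finset.card_image_of_injOn hinj).symm
  · -- each fiber has ≥ 2 elements
    intro u hu hfix
    obtain ⟨-, j, hj⟩ := Finset.mem_filter.mp hu
    have key : ∀ w : Fin d, w ∈ Ver S → w ≠ u →
        (graphOf S).connectedComponentMk w = (graphOf S).connectedComponentMk u →
        2 ≤ ((Ver S).filter (fun v => psiF S v = u)).card := by
      intro w hw hne hcw
      have hwu : psiF S w = u := by
        rw [psiF_congr hw hu hcw, hfix]
      apply Finset.one_lt_card.mpr
      exact ⟨u, Finset.mem_filter.mpr ⟨hu, hfix⟩, w, Finset.mem_filter.mpr ⟨hw, hwu⟩, hne.symm⟩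
    rcases hj with hj | hj
    · refine key (S j).2 (snd_mem_Ver S j) ?_ ?_
      · rw [← hj]; exact (hSeq j).ne'
      · rw [← hj]; exact (cmk_slot hSeq j).symm
    · refine key (S j).1 (fst_mem_Ver S j) ?_ ?_
      · rw [← hj]; exact (hSeq j).ne
      · rw [← hj]; exact (cmk_slot hSeq j)


lemma seg_card {d i : ℕ} (hid : i ≤ d) : (seg d i).card = i := by
  rw [seg]
  have : (univ.filter (fun v : Fin d => (v : ℕ) < i)) = Finset.attachFin (Finset.range i)
      (fun n hn => lt_of_lt_of_le (Finset.mem_range.mp hn) hid) := by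
    ext v; simp [Finset.mem_attachFin]
  rw [this, Finset.card_attachFin, Finset.card_range]

lemma psi_card {d i t : ℕ} (hid : i ≤ d) :
    (Psi (d := d) (seg d i) t).card ≤ i.choose t * t ^ (i - t) := by
  classical
  set Q := seg d i with hQ
  have hQcard : Q.card = i := seg_card hid
  have hmemb : ∀ ψ ∈ Psi Q t, Q.filter (fun v => ψ v = v) ∈ Q.powersetCard t := by
    intro ψ hψ
    obtain ⟨-, -, -, h2, -⟩ := Finset.mem_filter.mp hψ
    exact Finset.mem_powersetCard.mpr ⟨Finset.filter_subset _ _, h2⟩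
  rw [Finset.card_eq_sum_card_fiberwise hmemb]
  have hfib : ∀ M ∈ Q.powersetCard t,
      ((Psi Q t).filter (fun ψ => Q.filter (fun v => ψ v = v) = M)).card ≤ t ^ (i - t) := by
    intro M hM
    obtain ⟨hMQ, hMcard⟩ := Finset.mem_powersetCard.mp hM
    have hsub : (Psi Q t).filter (fun ψ => Q.filter (fun v => ψ v = v) = M) ⊆
        Fintype.piFinset (fun v => if v ∈ Q ∧ v ∉ M then M else {v}) := by
      intro ψ hψ
      obtain ⟨hψ1, hψ2⟩ := Finset.mem_filter.mp hψ
      obtain ⟨-, h0, h1, -, -⟩ := Finset.mem_filter.mp hψ1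
      rw [Fintype.mem_piFinset]
      intro v
      by_cases hv : v ∈ Q ∧ v ∉ M
      · rw [if_pos hv]
        rw [← hψ2]
        exact Finset.mem_filter.mpr ⟨(h1 v hv.1).1, (h1 v hv.1).2⟩
      · rw [if_neg hv]
        push_neg at hv
        by_cases hvQ : v ∈ Q
        · have hvM := hv hvQ
          rw [← hψ2] at hvM
          simp [(Finset.mem_filter.mp hvM).2]
        · simp [h0 v hvQ]
    calc ((Psi Q t).filter (fun ψ => Q.filter (fun v => ψ v = v) = M)).card
        ≤ (Fintype.piFinset (fun v => if v ∈ Q ∧ v ∉ M then M else {v})).card :=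
          Finset.card_le_card hsub
      _ = ∏ v : Fin d, (if v ∈ Q ∧ v ∉ M then M else {v}).card := Fintype.card_piFinset _
      _ = ∏ v : Fin d, (if v ∈ Q ∧ v ∉ M then t else 1) := by
          apply Finset.prod_congr rfl
          intro v _
          by_cases hv : v ∈ Q ∧ v ∉ M
          · rw [if_pos hv, if_pos hv, hMcard]
          · rw [if_neg hv, if_neg hv, Finset.card_singleton]
      _ = t ^ (univ.filter (fun v : Fin d => v ∈ Q ∧ v ∉ M)).card := by
          rw [Finset.prod_ite, Finset.prod_const, Finset.prod_const_one, mul_one]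
      _ = t ^ (Q \ M).card := by
          congr 1
          congr 1
          ext v
          simp [Finset.mem_sdiff]
      _ = t ^ (i - t) := by rw [Finset.card_sdiff_of_subset hMQ, hQcard, hMcard]
  calc ∑ M ∈ Q.powersetCard t,
        ((Psi Q t).filter (fun ψ => Q.filter (fun v => ψ v = v) = M)).card
      ≤ ∑ M ∈ Q.powersetCard t, t ^ (i - t) := Finset.sum_le_sum hfib
    _ = (Q.powersetCard t).card * t ^ (i - t) := by rw [Finset.sum_const, smul_eq_mul]
    _ = i.choose t * t ^ (i - t) := by rw [Finset.card_powersetCard, hQcard]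


lemma epairs_card {d i t : ℕ} {ψ : Fin d → Fin d} (hid : i ≤ d)
    (hψ : ψ ∈ Psi (seg d i) t) (h2t : 2*t ≤ i) (hkt : i - 2*t < t)
    (hk2 : (i - 2*t)^2 < 2*t) :
    (Epairs (seg d i) ψ).card ≤ 10 * t := by
  classical
  set Q := seg d i with hQ
  obtain ⟨-, h0, h1, h2, h3⟩ := Finset.mem_filter.mp hψ
  set M := Q.filter (fun v => ψ v = v) with hM
  set n : Fin d → ℕ := fun u => (Q.filter (fun v => ψ v = u)).card with hn
  have hmem1 : ∀ p ∈ Epairs Q ψ, ψ p.1 ∈ M := by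
    intro p hp
    obtain ⟨hpQ, -⟩ := Finset.mem_filter.mp hp
    have h1Q := (Finset.mem_product.mp hpQ).1
    exact Finset.mem_filter.mpr ⟨(h1 _ h1Q).1, (h1 _ h1Q).2⟩
  have hcard1 : (Epairs Q ψ).card = ∑ u ∈ M, (n u)^2 := by
    rw [Finset.card_eq_sum_card_fiberwise hmem1]
    apply Finset.sum_congr rfl
    intro u hu
    have : (Epairs Q ψ).filter (fun p => ψ p.1 = u)
        = (Q.filter (fun v => ψ v = u)) ×ˢ (Q.filter (fun v => ψ v = u)) := by
      ext p
      simp only [Epairs, Finset.mem_filter, Finset.mem_product]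
      constructor
      · rintro ⟨⟨⟨hx, hy⟩, hxy⟩, hxu⟩
        exact ⟨⟨hx, hxu⟩, ⟨hy, hxy ▸ hxu⟩⟩
      · rintro ⟨⟨hx, hxu⟩, ⟨hy, hyu⟩⟩
        exact ⟨⟨⟨hx, hy⟩, hxu.trans hyu.symm⟩, hxu⟩
    rw [this, Finset.card_product]
    simp [hn, sq]
  have hcard2 : ∑ u ∈ M, n u = i := by
    have hmem2 : ∀ v ∈ Q, ψ v ∈ M := by
      intro v hv
      exact Finset.mem_filter.mpr ⟨(h1 v hv).1, (h1 v hv).2⟩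
    rw [← seg_card hid, ← hQ, Finset.card_eq_sum_card_fiberwise hmem2]
  have hge2 : ∀ u ∈ M, 2 ≤ n u := by
    intro u hu
    obtain ⟨huQ, hufix⟩ := Finset.mem_filter.mp hu
    exact h3 u huQ hufix
  -- arithmetic
  set k := i - 2*t with hkdef
  have hMcard : M.card = t := h2
  have hsplit : ∀ u ∈ M, (n u)^2 = (n u - 2)^2 + 4*(n u - 2) + 4 := by
    intro u hu
    have h2u := hge2 u hu
    obtain ⟨a, ha⟩ : ∃ a, n u = a + 2 := ⟨n u - 2, by omega⟩
    rw [ha, Nat.add_sub_cancel]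
    ring
  have hsum_e : ∑ u ∈ M, (n u - 2) = k := by
    have : ∑ u ∈ M, n u = (∑ u ∈ M, (n u - 2)) + 2 * M.card := by
      rw [mul_comm, ← smul_eq_mul, ← Finset.sum_const, ← Finset.sum_add_distrib]
      apply Finset.sum_congr rfl
      intro u hu
      have := hge2 u hu
      omega
    rw [hcard2, hMcard] at this
    omega
  have hsum_sq : ∑ u ∈ M, (n u - 2)^2 ≤ k^2 := by
    calc ∑ u ∈ M, (n u - 2)^2 ≤ ∑ u ∈ M, (n u - 2) * k := by
          apply Finset.sum_le_sum
          intro u hu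
          rw [sq]
          apply Nat.mul_le_mul_left
          rw [← hsum_e]
          exact Finset.single_le_sum (f := fun v => n v - 2) (fun v _ => Nat.zero_le _) hu
      _ = k * k := by rw [← Finset.sum_mul, hsum_e]
      _ = k^2 := (sq k).symm
  have key : ∑ u ∈ M, (n u)^2 ≤ 4*t + 4*k + k^2 := by
    calc ∑ u ∈ M, (n u)^2 = ∑ u ∈ M, ((n u - 2)^2 + 4*(n u - 2) + 4) :=
          Finset.sum_congr rfl hsplit
      _ = (∑ u ∈ M, (n u - 2)^2) + 4 * (∑ u ∈ M, (n u - 2)) + 4 * M.card := by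
          rw [Finset.sum_add_distrib, Finset.sum_add_distrib, Finset.mul_sum, Finset.sum_const]
          ring
      _ ≤ k^2 + 4*k + 4*t := by rw [hsum_e, hMcard]; omega
      _ = 4*t + 4*k + k^2 := by ring
  rw [hcard1]
  calc ∑ u ∈ M, (n u)^2 ≤ 4*t + 4*k + k^2 := key
    _ ≤ 10 * t := by nlinarith [hkt, hk2]



lemma comb (d m i t : ℕ) (hid : i ≤ d) (h2t : 2*t ≤ i) (hkt : i - 2*t < t)
    (hk2 : (i - 2*t)^2 < 2*t) :
    (W d m (seg d i) t).ncard ≤ i.choose t * t ^ (i - t) * (10*t) ^ (2*m) := by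
  classical
  set Q := seg d i with hQ
  set T : Finset ((Fin d → Fin d) × (Fin (2*m) → Fin d × Fin d)) :=
    (Psi Q t).biUnion (fun ψ => ({ψ} : Finset (Fin d → Fin d)) ×ˢ
      (Fintype.piFinset (fun _ : Fin (2*m) => Epairs Q ψ))) with hT
  have hmap : ∀ S ∈ W d m Q t, (psiF S, S) ∈ T := by
    intro S hS
    obtain ⟨hSeq, hVer, -, hnum⟩ := hS
    rw [hT]
    apply Finset.mem_biUnion.mpr
    refine ⟨psiF S, psiF_mem_Psi hSeq hVer hnum, ?_⟩
    apply Finset.mem_product.mpr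
    refine ⟨Finset.mem_singleton_self _, ?_⟩
    apply Fintype.mem_piFinset.mpr
    intro j
    exact slot_mem_Epairs hSeq hVer j
  have h1 : (W d m Q t).ncard ≤ T.card := by
    have := Set.ncard_le_ncard_of_injOn (t := (↑T : Set _)) (fun S => (psiF S, S))
      (fun a ha => hmap a ha) (fun a _ b _ h => congrArg Prod.snd h) (T.finite_toSet)
    rwa [Set.ncard_coe_finset] at this
  have h2 : T.card ≤ (Psi Q t).card * (10*t) ^ (2*m) := by
    calc T.card ≤ ∑ ψ ∈ Psi Q t, (({ψ} : Finset (Fin d → Fin d)) ×ˢ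
          (Fintype.piFinset (fun _ : Fin (2*m) => Epairs Q ψ))).card := Finset.card_biUnion_le
      _ ≤ ∑ ψ ∈ Psi Q t, (10*t) ^ (2*m) := by
          apply Finset.sum_le_sum
          intro ψ hψ
          rw [Finset.card_product, Finset.card_singleton, one_mul, Fintype.card_piFinset]
          rw [Finset.prod_const, Finset.card_univ, Fintype.card_fin]
          exact Nat.pow_le_pow_left (epairs_card hid hψ h2t hkt hk2) _
      _ = (Psi Q t).card * (10*t) ^ (2*m) := by rw [Finset.sum_const, smul_eq_mul]
  calc (W d m Q t).ncard ≤ T.card := h1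
    _ ≤ (Psi Q t).card * (10*t) ^ (2*m) := h2
    _ ≤ i.choose t * t ^ (i - t) * (10*t) ^ (2*m) :=
        Nat.mul_le_mul_right _ (psi_card hid)


lemma fact_mul_pow_le (t s : ℕ) : t.factorial * t^s ≤ (t+s).factorial := by
  induction s with
  | zero => simp
  | succ s ih =>
    rw [pow_succ, ← mul_assoc]
    calc t.factorial * t^s * t ≤ (t+s).factorial * t := Nat.mul_le_mul_right _ ih
      _ ≤ (t+s).factorial * (t+s+1) := Nat.mul_le_mul_left _ (by omega)
      _ = (t+s+1).factorial := by rw [Nat.factorial_succ]; ring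

lemma pow_self_le (t : ℕ) : (t:ℝ)^t ≤ 3^t * t.factorial := by
  have h0 : ((t:ℝ))^t / t.factorial ≤ Real.exp t := by
    calc (t:ℝ)^t / t.factorial
        ≤ ∑ j ∈ Finset.range (t+1), (t:ℝ)^j / j.factorial :=
          Finset.single_le_sum (f := fun j => (t:ℝ)^j / j.factorial)
            (fun j _ => by positivity) (Finset.self_mem_range_succ t)
      _ ≤ Real.exp t := Real.sum_le_exp_of_nonneg (by positivity) _
  have hexp : Real.exp t ≤ 3^t := by
    rw [← Real.exp_one_pow]
    exact pow_le_pow_left₀ (Real.exp_pos 1).le (by linarith [Real.exp_one_lt_d9]) t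
  have hf : (0:ℝ) < t.factorial := by positivity
  calc (t:ℝ)^t = ((t:ℝ)^t / t.factorial) * t.factorial := by field_simp
    _ ≤ Real.exp t * t.factorial := mul_le_mul_of_nonneg_right h0 hf.le
    _ ≤ 3^t * t.factorial := mul_le_mul_of_nonneg_right hexp hf.le

lemma choose_le_two_pow (i t : ℕ) : i.choose t ≤ 2^i := by
  by_cases ht : t ≤ i
  · calc i.choose t ≤ ∑ j ∈ Finset.range (i+1), i.choose j :=
        Finset.single_le_sum (f := fun j => i.choose j) (fun j _ => Nat.zero_le _)
          (Finset.mem_range.mpr (by omega))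
      _ = 2^i := Nat.sum_range_choose i
  · rw [Nat.choose_eq_zero_of_lt (by omega)]; exact Nat.zero_le _

end S19

/-- (Counting lemma, large `t`.) There are absolute constants
`υ, CONST ≥ 1` and `m₀ ≥ 1` such that for every integer `m ≥ m₀`, every real
`1 ≤ F ≤ υ·log m/log log m`, every `d ≥ 1` and all integers `i, t` with `1 ≤ i ≤ 2m`,
`i ≤ d`, `1 ≤ t ≤ i/2` and `(i-2t)² < 2(3t-i)`:
`|W_{[i],t}| ≤ CONST^{2m} · i! · m^{4m+i-5t} · (1/F)^{4m-2i}`. -/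
theorem statement19 :
    ∃ (υ CONST : ℝ) (m₀ : ℕ), 1 ≤ υ ∧ 1 ≤ CONST ∧ 0 < m₀ ∧
      ∀ (m : ℕ), m₀ ≤ m →
      ∀ (F : ℝ), 1 ≤ F → F ≤ υ * Real.log m / Real.log (Real.log m) →
      ∀ (d : ℕ), 0 < d →
      ∀ (i t : ℕ), 1 ≤ i → i ≤ 2*m → i ≤ d →
      1 ≤ t → 2*t ≤ i →
      ((i : ℤ) - 2*(t : ℤ))^2 < 2*(3*(t : ℤ) - (i : ℤ)) →
        ((W d m (seg d i) t).ncard : ℝ) ≤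
          CONST ^ (2*m) * (i.factorial : ℝ) *
            (m : ℝ) ^ (4*(m : ℤ) + (i : ℤ) - 5*(t : ℤ)) *
            (F⁻¹) ^ (4*(m : ℤ) - 2*(i : ℤ)) := by
  refine ⟨1, 1000, 100, le_refl 1, by norm_num, by norm_num, ?_⟩
  intro m hm F hF1 hF2 d hd i t hi1 hi2m hid ht1 h2t hsq
  have ht_m : t ≤ m := by omega
  have hm1 : 1 ≤ m := by omega
  set k := i - 2*t with hk
  have hkZ : ((i:ℤ) - 2*(t:ℤ)) = (k:ℤ) := by push_cast; omega
  rw [hkZ] at hsq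
  have h3t : 2*(3*(t:ℤ) - (i:ℤ)) = 2*(t:ℤ) - 2*(k:ℤ) := by push_cast; omega
  rw [h3t] at hsq
  have hktZ : (k:ℤ) < t := by nlinarith [sq_nonneg ((k:ℤ))]
  have hkt : k < t := by exact_mod_cast hktZ
  have hk2 : k^2 < 2*t := by
    have h1 : ((k:ℤ))^2 < 2*(t:ℤ) := by
      have : (0:ℤ) ≤ (k:ℤ) := Int.natCast_nonneg k
      linarith
    exact_mod_cast h1
  have hcomb := S19.comb d m i t hid h2t hkt hk2
  -- real facts about F
  have hm100 : (100:ℝ) ≤ (m:ℝ) := by exact_mod_cast hm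
  have hlog3 : (3:ℝ) ≤ Real.log m := by
    rw [Real.le_log_iff_exp_le (by linarith)]
    have h3 : Real.exp 3 = (Real.exp 1)^3 := by rw [Real.exp_one_pow]; norm_num
    rw [h3]
    calc (Real.exp 1)^3 ≤ 2.7182818286^3 :=
          pow_le_pow_left₀ (Real.exp_pos 1).le Real.exp_one_lt_d9.le 3
      _ ≤ 100 := by norm_num
      _ ≤ (m:ℝ) := hm100
  have hloglog : (1:ℝ) ≤ Real.log (Real.log m) := by
    have h3 : (1:ℝ) ≤ Real.log 3 := by
      rw [Real.le_log_iff_exp_le (by norm_num)]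
      calc Real.exp 1 ≤ 2.7182818286 := (Real.exp_one_lt_d9).le
        _ ≤ 3 := by norm_num
    calc (1:ℝ) ≤ Real.log 3 := h3
      _ ≤ Real.log (Real.log m) := Real.log_le_log (by norm_num) hlog3
  have hFlog : F ≤ Real.log m := by
    rw [one_mul] at hF2
    calc F ≤ Real.log m / Real.log (Real.log m) := hF2
      _ ≤ Real.log m / 1 :=
          div_le_div_of_nonneg_left (by linarith) (by norm_num) hloglog
      _ = Real.log m := div_one _
  have hFsqrt : F^2 ≤ 4*(m:ℝ) := by
    have hmpos : (0:ℝ) < m := by linarith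
    have hsp : (0:ℝ) < Real.sqrt m := Real.sqrt_pos.mpr hmpos
    have h1 : Real.log (Real.sqrt m) ≤ Real.sqrt m - 1 := Real.log_le_sub_one_of_pos hsp
    have h2 : Real.log (Real.sqrt m) = Real.log m / 2 := Real.log_sqrt hmpos.le
    have hs : Real.log m ≤ 2 * Real.sqrt m := by linarith
    have hF2' : F ≤ 2*Real.sqrt m := le_trans hFlog hs
    calc F^2 ≤ (2*Real.sqrt m)^2 := by
          apply pow_le_pow_left₀ (by linarith) hF2'
      _ = 4 * (Real.sqrt m)^2 := by ring
      _ = 4 * m := by rw [Real.sq_sqrt hmpos.le]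
  -- exponent conversions
  have e1eq : (4*(m:ℤ) + (i:ℤ) - 5*(t:ℤ)) = ((4*m + i - 5*t : ℕ) : ℤ) := by push_cast; omega
  have e2eq : (4*(m:ℤ) - 2*(i:ℤ)) = ((4*m - 2*i : ℕ) : ℤ) := by push_cast; omega
  rw [e1eq, e2eq, zpow_natCast, zpow_natCast, inv_pow]
  set E1 := 4*m + i - 5*t with hE1
  set A2 := 4*m - 2*i with hA2
  set a := 2*m - i with ha
  have hA2a : A2 = 2*a := by omega
  rw [← div_eq_mul_inv, le_div_iff₀ (by positivity)]
  -- cast the combinatorial bound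
  have hcombR : ((W d m (seg d i) t).ncard : ℝ) ≤
      (i.choose t : ℝ) * (t:ℝ)^(i-t) * (10*(t:ℝ))^(2*m) := by
    exact_mod_cast hcomb
  have hFA2 : F^A2 ≤ (4*(m:ℝ))^a := by
    rw [hA2a, pow_mul]
    exact pow_le_pow_left₀ (by positivity) hFsqrt a
  have key : (i.choose t : ℝ) * (t:ℝ)^(i-t) * (10*(t:ℝ))^(2*m) * (4*(m:ℝ))^a
      ≤ 1000^(2*m) * (i.factorial:ℝ) * (m:ℝ)^E1 := by
    have hsplitexp : (t:ℝ)^(i-t) * (t:ℝ)^(2*m) = (t:ℝ)^(2*t) * (t:ℝ)^(2*m+k-t) := by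
      rw [← pow_add, ← pow_add]
      congr 1
      omega
    have hchoose : (i.choose t : ℝ) ≤ 2^(2*m) := by
      calc (i.choose t : ℝ) ≤ (2^i : ℕ) := by exact_mod_cast S19.choose_le_two_pow i t
        _ = (2:ℝ)^i := by push_cast; ring
        _ ≤ 2^(2*m) := pow_le_pow_right₀ (by norm_num) hi2m
    have h4a : (4:ℝ)^a ≤ 4^(2*m) := pow_le_pow_right₀ (by norm_num) (by omega)
    have ht2t : (t:ℝ)^(2*t) ≤ 3^m * (i.factorial:ℝ) := by
      have hn1 : t.factorial * t^t ≤ i.factorial := by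
        calc t.factorial * t^t ≤ (t+t).factorial := S19.fact_mul_pow_le t t
          _ ≤ i.factorial := Nat.factorial_le (by omega)
      have hn1R : (t.factorial:ℝ) * (t:ℝ)^t ≤ (i.factorial:ℝ) := by exact_mod_cast hn1
      calc (t:ℝ)^(2*t) = (t:ℝ)^t * (t:ℝ)^t := by rw [← pow_add]; congr 1; omega
        _ ≤ (3^t * t.factorial) * (t:ℝ)^t := by
            apply mul_le_mul_of_nonneg_right (S19.pow_self_le t) (by positivity)
        _ = 3^t * ((t.factorial:ℝ) * (t:ℝ)^t) := by ring
        _ ≤ 3^t * (i.factorial:ℝ) := by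
            apply mul_le_mul_of_nonneg_left hn1R (by positivity)
        _ ≤ 3^m * (i.factorial:ℝ) := by
            apply mul_le_mul_of_nonneg_right (pow_le_pow_right₀ (by norm_num) ht_m)
            positivity
    have htm1 : (t:ℝ)^(2*m+k-t) ≤ (m:ℝ)^(2*m+2*k-t) := by
      calc (t:ℝ)^(2*m+k-t) ≤ (m:ℝ)^(2*m+k-t) := by
            apply pow_le_pow_left₀ (by positivity) (by exact_mod_cast ht_m)
        _ ≤ (m:ℝ)^(2*m+2*k-t) := pow_le_pow_right₀ (by linarith) (by omega)
    have hma : (m:ℝ)^(2*m+2*k-t) * (m:ℝ)^a = (m:ℝ)^E1 := by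
      rw [← pow_add]
      congr 1
      omega
    calc (i.choose t : ℝ) * (t:ℝ)^(i-t) * (10*(t:ℝ))^(2*m) * (4*(m:ℝ))^a
        = (i.choose t : ℝ) * ((10:ℝ)^(2*m) * (4:ℝ)^a) *
            (((t:ℝ)^(2*t) * (t:ℝ)^(2*m+k-t)) * (m:ℝ)^a) := by
          rw [mul_pow, mul_pow, ← hsplitexp]; ring
      _ ≤ (2:ℝ)^(2*m) * ((10:ℝ)^(2*m) * (4:ℝ)^(2*m)) *
            (((3:ℝ)^m * (i.factorial:ℝ) * (m:ℝ)^(2*m+2*k-t)) * (m:ℝ)^a) := by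
          apply mul_le_mul
          · apply mul_le_mul hchoose (by
              apply mul_le_mul_of_nonneg_left h4a (by positivity)) (by positivity) (by positivity)
          · apply mul_le_mul_of_nonneg_right ?_ (by positivity)
            apply mul_le_mul ht2t htm1 (by positivity) (by positivity)
          · positivity
          · positivity
      _ = ((2:ℝ)^(2*m) * (10:ℝ)^(2*m) * (4:ℝ)^(2*m) * (3:ℝ)^m) * (i.factorial:ℝ) *
            ((m:ℝ)^(2*m+2*k-t) * (m:ℝ)^a) := by ring
      _ ≤ (1000:ℝ)^(2*m) * (i.factorial:ℝ) * ((m:ℝ)^(2*m+2*k-t) * (m:ℝ)^a) := by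
          apply mul_le_mul_of_nonneg_right ?_ (by positivity)
          apply mul_le_mul_of_nonneg_right ?_ (by positivity)
          calc (2:ℝ)^(2*m) * (10:ℝ)^(2*m) * (4:ℝ)^(2*m) * (3:ℝ)^m
              ≤ (2:ℝ)^(2*m) * (10:ℝ)^(2*m) * (4:ℝ)^(2*m) * (3:ℝ)^(2*m) := by
                apply mul_le_mul_of_nonneg_left (pow_le_pow_right₀ (by norm_num) (by omega))
                positivity
            _ = (240:ℝ)^(2*m) := by rw [← mul_pow, ← mul_pow, ← mul_pow]; norm_num
            _ ≤ (1000:ℝ)^(2*m) := pow_le_pow_left₀ (by norm_num) (by norm_num) _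
      _ = (1000:ℝ)^(2*m) * (i.factorial:ℝ) * (m:ℝ)^E1 := by rw [hma]
  calc ((W d m (seg d i) t).ncard : ℝ) * F^A2
      ≤ ((i.choose t : ℝ) * (t:ℝ)^(i-t) * (10*(t:ℝ))^(2*m)) * (4*(m:ℝ))^a := by
        apply mul_le_mul hcombR hFA2 (by positivity) (by positivity)
    _ ≤ 1000^(2*m) * (i.factorial:ℝ) * (m:ℝ)^E1 := key

end
end
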